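/- Let 𝔪 = 𝔪_{-1} ⊕ 𝔪_{-2} be a 2-step complex graded nilpotent Lie algebra (i.e., [𝔪_{-1},𝔪_{-1}] = 𝔪_{-2}, [𝔪_{-1},𝔪_{-2}] = 0) with dim 𝔪_{-2} = 2, which is non-degenerate (𝔪_{-1} ∩ Z(𝔪) = 0). Then there exists a non-zero y ∈ 𝔪_{-1} such that the adjoint map ad y : 𝔪 → 𝔪 has rank 1. -/

import Mathlib

open Module LinearMap

/-- a non-degenerate 2-step complex graded nilpotent Lie algebra
`𝔪 = 𝔪₋₁ ⊕ 𝔪₋₂` with `dim 𝔪₋₂ = 2` has a non-zero `y ∈ 𝔪₋₁` with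
`rank (ad y) = 1`. -/
theorem stmt8 {M : Type*} [LieRing M] [LieAlgebra ℂ M] [FiniteDimensional ℂ M]
    (m1 m2 : Submodule ℂ M)
    (hcompl : IsCompl m1 m2)
    (hbr : m2 = Submodule.span ℂ {z | ∃ u ∈ m1, ∃ v ∈ m1, ⁅u, v⁆ = z})
    (hbr' : ∀ u ∈ m1, ∀ v ∈ m1, ⁅u, v⁆ ∈ m2)
    (hcentral : ∀ v ∈ m2, ∀ z : M, ⁅v, z⁆ = 0)
    (hdim : finrank ℂ m2 = 2)
    (hnd : ∀ y ∈ m1, (∀ z : M, ⁅y, z⁆ = 0) → y = 0) :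
    ∃ y ∈ m1, y ≠ 0 ∧
      finrank ℂ (LinearMap.range (LieAlgebra.ad ℂ M y)) = 1 := by
  
  classical
  -- m1 is nontrivial
  have hm1ne : m1 ≠ ⊥ := by
    intro h
    have : m2 = ⊥ := by
      rw [hbr]
      refine le_antisymm ?_ bot_le
      rw [Submodule.span_le]
      rintro z ⟨u, hu, v, hv, rfl⟩
      rw [h] at hu
      simp only [Submodule.mem_bot] at hu
      simp [hu]
    rw [this] at hdim
    simp at hdim
  haveI : Nontrivial m1 := Submodule.nontrivial_iff_ne_bot.mpr hm1ne
  -- basis of m2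
  obtain b := Module.finBasisOfFinrankEq ℂ m2 hdim
  -- bilinear bracket map
  let β : m1 →ₗ[ℂ] m1 →ₗ[ℂ] m2 := LinearMap.mk₂ ℂ
    (fun x y => ⟨⁅(x:M), (y:M)⁆, hbr' _ x.2 _ y.2⟩)
    (fun x x' y => Subtype.ext (by simp [add_lie]))
    (fun c x y => Subtype.ext (by simp [smul_lie]))
    (fun x y y' => Subtype.ext (by simp [lie_add]))
    (fun c x y => Subtype.ext (by simp [lie_smul]))
  let A : m1 →ₗ[ℂ] (m1 →ₗ[ℂ] ℂ) := β.compr₂ (b.coord 0)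
  let B : m1 →ₗ[ℂ] (m1 →ₗ[ℂ] ℂ) := β.compr₂ (b.coord 1)
  -- find y ≠ 0 and nonzero functional φ killing β y ·
  have key : ∃ y : m1, y ≠ 0 ∧ ∃ φ : m2 →ₗ[ℂ] ℂ, φ ≠ 0 ∧ ∀ x : m1, φ (β y x) = 0 := by
    by_cases hA : LinearMap.ker A = ⊥
    · -- A injective, use eigenvalue
      have hinj : Function.Injective A := LinearMap.ker_eq_bot.mp hA
      have hfr : finrank ℂ m1 = finrank ℂ (m1 →ₗ[ℂ] ℂ) := by
        rw [Subspace.dual_finrank_eq]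
      let E := LinearEquiv.ofInjective A hinj
      -- endomorphism A⁻¹ ∘ B ... use linearEquivOfInjective
      let E2 := LinearMap.linearEquivOfInjective A hinj hfr
      let T : Module.End ℂ m1 := E2.symm.toLinearMap ∘ₗ B
      obtain ⟨c, hc⟩ := Module.End.exists_eigenvalue T
      obtain ⟨y, hy⟩ := hc.exists_hasEigenvector
      have hTy : T y = c • y := hy.apply_eq_smul
      have hBy : B y = c • A y := by
        have : E2 (T y) = B y := by
          simp [T, E2]
        rw [hTy] at this
        rw [← this]
        simp [E2, LinearMap.linearEquivOfInjective]
        rfl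
      refine ⟨y, hy.2, b.coord 1 - c • b.coord 0, ?_, ?_⟩
      · intro h
        have h1 : (b.coord 1 - c • b.coord 0) (b 1) = 0 := by rw [h]; simp
        simp [Module.Basis.coord_apply, Finsupp.single_apply] at h1
      · intro x
        have := congrArg (fun f => f x) hBy
        simp only [LinearMap.smul_apply] at this
        simp only [LinearMap.sub_apply, LinearMap.smul_apply]
        have hAx : A y x = b.coord 0 (β y x) := rfl
        have hBx : B y x = b.coord 1 (β y x) := rfl
        rw [← hAx, ← hBx, this]
        ring
    · -- A has kernel
      obtain ⟨y, hy, hy0⟩ := Submodule.exists_mem_ne_zero_of_ne_bot hA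
      refine ⟨y, hy0, b.coord 0, ?_, ?_⟩
      · intro h
        have h1 : (b.coord 0) (b 0) = 0 := by rw [h]; simp
        simp [Module.Basis.coord_apply] at h1
      · intro x
        have : A y = 0 := hy
        have := congrArg (fun f => f x) this
        exact this
  obtain ⟨y, hy0, φ, hφ, hker⟩ := key
  -- the line L
  set L : Submodule ℂ M := (LinearMap.ker φ).map m2.subtype with hL
  have hLfr : finrank ℂ L = 1 := by
    have h1 : finrank ℂ (LinearMap.ker φ) = 1 := by
      have hrn := LinearMap.finrank_range_add_finrank_ker φ
      have hle : finrank ℂ (LinearMap.range φ) ≤ 1 := by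
        have := Submodule.finrank_le (LinearMap.range φ)
        simpa using this
      have hpos : 0 < finrank ℂ (LinearMap.range φ) := by
        have hne : LinearMap.range φ ≠ ⊥ := by
          intro h
          exact hφ (LinearMap.range_eq_bot.mp h)
        exact Nat.pos_of_ne_zero fun h0 => hne (Submodule.finrank_eq_zero.mp h0)
      rw [hdim] at hrn
      omega
    rw [← h1]
    exact (Submodule.equivMapOfInjective m2.subtype (Submodule.injective_subtype m2)
      (LinearMap.ker φ)).symm.finrank_eq
  -- range (ad y) ≤ L
  have hsub : LinearMap.range (LieAlgebra.ad ℂ M (y : M)) ≤ L := by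
    rintro w ⟨z, rfl⟩
    have hz : z ∈ m1 ⊔ m2 := by rw [hcompl.sup_eq_top]; trivial
    obtain ⟨a, ha, v, hv, rfl⟩ := Submodule.mem_sup.mp hz
    have hv0 : ⁅(y : M), v⁆ = 0 := by
      rw [← lie_skew, hcentral v hv, neg_zero]
    have : LieAlgebra.ad ℂ M (y : M) (a + v) = ⁅(y:M), a⁆ := by
      simp [LieAlgebra.ad_apply, lie_add, hv0]
    rw [this]
    refine ⟨β y ⟨a, ha⟩, ?_, rfl⟩
    exact hker ⟨a, ha⟩
  have hnz : LinearMap.range (LieAlgebra.ad ℂ M (y : M)) ≠ ⊥ := by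
    intro h
    apply hy0
    have : (y : M) = 0 := by
      apply hnd _ y.2
      intro z
      have : LieAlgebra.ad ℂ M (y : M) z ∈ (⊥ : Submodule ℂ M) := by
        rw [← h]; exact LinearMap.mem_range_self _ _
      simpa [LieAlgebra.ad_apply] using this
    exact Subtype.ext this
  refine ⟨y, y.2, fun h => hy0 (Subtype.ext h), ?_⟩
  have h1 : finrank ℂ (LinearMap.range (LieAlgebra.ad ℂ M (y:M))) ≤ 1 := by
    rw [← hLfr]
    exact Submodule.finrank_mono hsub
  have h2 : 0 < finrank ℂ (LinearMap.range (LieAlgebra.ad ℂ M (y:M))) := by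
    rcases Nat.eq_zero_or_pos _ with h | h
    · exact absurd (Submodule.finrank_eq_zero.mp h) hnz
    · exact h
  omega
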